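/- Let Γ ∈ ℂ^{q×q} be complex symmetric (Γᵀ = Γ) with Γ𝟙_q = 0, and suppose 0 is an eigenvalue of Γ of algebraic multiplicity at least 2. Then there exists an eigenvector y of Γ for eigenvalue 0 with y ∉ span{𝟙_q}. (Equivalently, the geometric multiplicity of 0 is at least 2: complex symmetry rules out a Jordan block attached only to 𝟙_q.) -/

import Mathlib

open Matrix in
theorem symmetric_zero_eigenvector_outside_ones
    (q : ℕ)
    (Γ : Matrix (Fin q) (Fin q) ℂ)
    (hsymm : Γᵀ = Γ)
    (hones : Γ.mulVec (fun _ => 1) = 0)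
    (hmult : 2 ≤ (Matrix.charpoly Γ).rootMultiplicity 0) :
    ∃ y : Fin q → ℂ, Γ.mulVec y = 0 ∧ ∀ c : ℂ, y ≠ c • (fun _ => 1 : Fin q → ℂ) := by
  by_contra hcon
  push_neg at hcon
  have hker : ∀ y : Fin q → ℂ, Γ.mulVec y = 0 → ∃ c : ℂ, y = c • (fun _ => 1 : Fin q → ℂ) :=
    fun y hy => hcon y hy
  -- q ≥ 2 since rootMultiplicity ≤ natDegree = q
  have hq : 0 < q := by
    have hd := Polynomial.pow_rootMultiplicity_dvd (Matrix.charpoly Γ) 0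
    have h1 := Polynomial.natDegree_le_of_dvd hd (Matrix.charpoly_monic Γ).ne_zero
    rw [Matrix.charpoly_natDegree_eq_dim] at h1
    simp [Polynomial.natDegree_pow] at h1
    omega
  -- 1 ⬝ᵥ Γ w = 0 for all w
  have hdot : ∀ w : Fin q → ℂ, (fun _ => (1:ℂ)) ⬝ᵥ Γ.mulVec w = 0 := by
    intro w
    rw [Matrix.dotProduct_mulVec, ← Matrix.mulVec_transpose, hsymm, hones]
    simp
  -- no solution to Γ w = 1
  have hnosol : ∀ w : Fin q → ℂ, Γ.mulVec w ≠ (fun _ => (1:ℂ)) := by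
    intro w hw
    have h := hdot w
    rw [hw] at h
    simp [dotProduct] at h
    exact absurd h (by positivity)
  set φ : Module.End ℂ (Fin q → ℂ) := Γ.mulVecLin with hφ
  -- generalized eigenspace is contained in span of ones
  have hsub : φ.maxGenEigenspace 0 ≤ Submodule.span ℂ {(fun _ => 1 : Fin q → ℂ)} := by
    intro x hx
    rw [Module.End.mem_maxGenEigenspace] at hx
    obtain ⟨k, hk⟩ := hx
    simp only [zero_smul, sub_zero] at hk
    induction k generalizing x with
    | zero => simp at hk; simp [hk]
    | succ n ih =>
      have hk' : (φ ^ n) (φ x) = 0 := by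
        rw [← Module.End.mul_apply, ← pow_succ]
        exact hk
      have hφx := ih hk'
      rw [Submodule.mem_span_singleton] at hφx
      obtain ⟨c, hc⟩ := hφx
      rcases eq_or_ne c 0 with rfl | hc0
      · have hx0 : Γ.mulVec x = 0 := by
          have : φ x = 0 := by rw [← hc]; simp
          simpa [hφ] using this
        obtain ⟨c', hc'⟩ := hker x hx0
        rw [Submodule.mem_span_singleton]
        exact ⟨c', hc'.symm ▸ rfl⟩
      · exfalso
        apply hnosol (c⁻¹ • x)
        have hcx : Γ.mulVec x = c • (fun _ => 1 : Fin q → ℂ) := by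
          simpa [hφ] using hc.symm
        rw [Matrix.mulVec_smul, hcx]
        ext i
        simp [hc0]
  -- dimension bound
  have hle : Module.finrank ℂ (φ.maxGenEigenspace 0) ≤ 1 := by
    refine le_trans (Submodule.finrank_mono hsub) ?_
    have h : (fun _ => 1 : Fin q → ℂ) ≠ 0 := fun h => by
      have := congrFun h ⟨0, hq⟩; simp at this
    rw [finrank_span_singleton h]
  have h2 : 2 ≤ Module.finrank ℂ (φ.maxGenEigenspace 0) := by
    rw [LinearMap.finrank_maxGenEigenspace_zero_eq]
    have hcp : φ.charpoly = Γ.charpoly := by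
      rw [← LinearMap.charpoly_toMatrix φ (Pi.basisFun ℂ (Fin q))]
      congr 1
      ext i j
      simp [LinearMap.toMatrix_apply, hφ, Matrix.mulVecLin, Matrix.mulVec, dotProduct,
        Pi.basisFun_apply, Pi.single_apply]
    rw [hcp, ← Polynomial.rootMultiplicity_eq_natTrailingDegree']
    exact hmult
  omega
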